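/- Let f : ℝ^d → ℝ^d be locally Lipschitz in the sense that for each R > 0 there is L_R > 0 with |f(x) - f(x̄)| ≤ L_R |x - x̄| whenever |x| ∨ |x̄| ≤ R, where R ↦ L_R is increasing. Fix h > 0 with |f(0)| ≤ h and L_h ≥ 1, and define the modified truncation f_h(x) = f(x) if |x| ≤ h and f_h(x) = (|x|/h) f(h x/|x|) if |x| > h. Then f_h is globally Lipschitz with constant 4 L_h: |f_h(x) - f_h(x̄)| ≤ 4 L_h |x - x̄| for all x, x̄ ∈ ℝ^d. -/

import Mathlib

theorem stmt_0 {d : ℕ}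
    (f : EuclideanSpace ℝ (Fin d) → EuclideanSpace ℝ (Fin d))
    (L : ℝ → ℝ)
    (hLpos : ∀ R > (0:ℝ), 0 < L R)
    (hLmono : MonotoneOn L (Set.Ioi (0:ℝ)))
    (hlip : ∀ R > (0:ℝ), ∀ x y : EuclideanSpace ℝ (Fin d),
      max ‖x‖ ‖y‖ ≤ R → ‖f x - f y‖ ≤ L R * ‖x - y‖)
    (h : ℝ) (hh : 0 < h) (hf0 : ‖f 0‖ ≤ h) (hLh : 1 ≤ L h)
    (fh : EuclideanSpace ℝ (Fin d) → EuclideanSpace ℝ (Fin d))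
    (hfh : ∀ x, fh x = if ‖x‖ ≤ h then f x else (‖x‖ / h) • f ((h / ‖x‖) • x)) :
    ∀ x y : EuclideanSpace ℝ (Fin d), ‖fh x - fh y‖ ≤ 4 * L h * ‖x - y‖ := by
  have hK : 0 < L h := hLpos h hh
  -- bound on f on the closed ball of radius h
  have hfb : ∀ z : EuclideanSpace ℝ (Fin d), ‖z‖ ≤ h → ‖f z‖ ≤ 2 * L h * h := by
    intro z hz
    have h1 : ‖f z - f 0‖ ≤ L h * ‖z - 0‖ := hlip h hh z 0 (by simp [hz, hh.le])
    have h2 : ‖f z‖ - ‖f 0‖ ≤ ‖f z - f 0‖ := norm_sub_norm_le _ _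
    simp only [sub_zero] at h1
    nlinarith [norm_nonneg z, mul_le_mul_of_nonneg_left hz hK.le]
  -- formula for fh outside (including the boundary)
  have hfo : ∀ u : EuclideanSpace ℝ (Fin d), h ≤ ‖u‖ →
      fh u = (‖u‖ / h) • f ((h / ‖u‖) • u) := by
    intro u hu
    rw [hfh u]
    rcases eq_or_lt_of_le hu with e | l
    · rw [if_pos e.ge, ← e, div_self hh.ne', one_smul, one_smul]
    · rw [if_neg (not_le.mpr l)]
  -- inner case
  have inner : ∀ u v : EuclideanSpace ℝ (Fin d), ‖u‖ ≤ h → ‖v‖ ≤ h →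
      ‖fh u - fh v‖ ≤ L h * ‖u - v‖ := by
    intro u v hu hv
    rw [hfh u, hfh v, if_pos hu, if_pos hv]
    exact hlip h hh u v (max_le hu hv)
  -- outer case (WLOG ‖v‖ ≤ ‖u‖)
  have outer : ∀ u v : EuclideanSpace ℝ (Fin d), h ≤ ‖v‖ → ‖v‖ ≤ ‖u‖ →
      ‖fh u - fh v‖ ≤ 4 * L h * ‖u - v‖ := by
    intro u v hv huv
    have hu : h ≤ ‖u‖ := hv.trans huv
    have hu0 : (0:ℝ) < ‖u‖ := hh.trans_le hu
    have hv0 : (0:ℝ) < ‖v‖ := hh.trans_le hv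
    set pu := (h / ‖u‖) • u with hpu
    set pv := (h / ‖v‖) • v with hpv
    have hnpu : ‖pu‖ = h := by
      rw [hpu, norm_smul, Real.norm_eq_abs, abs_of_pos (by positivity),
        div_mul_cancel₀ _ hu0.ne']
    have hnpv : ‖pv‖ = h := by
      rw [hpv, norm_smul, Real.norm_eq_abs, abs_of_pos (by positivity),
        div_mul_cancel₀ _ hv0.ne']
    have key : fh u - fh v = (‖v‖ / h) • (f pu - f pv) + ((‖u‖ - ‖v‖) / h) • f pu := by
      rw [hfo u hu, hfo v hv, hpu, hpv]; module
    have hnn : ‖u‖ - ‖v‖ ≤ ‖u - v‖ := norm_sub_norm_le u v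
    have hdproj : ‖pu - pv‖ ≤ 2 * h / ‖u‖ * ‖u - v‖ := by
      have e : pu - pv = (h / ‖u‖) • (u - v) + (h / ‖u‖ - h / ‖v‖) • v := by
        rw [hpu, hpv]; module
      have hdd : h / ‖u‖ ≤ h / ‖v‖ := by
        apply div_le_div_of_nonneg_left hh.le hv0 huv
      have step : (h / ‖v‖ - h / ‖u‖) * ‖v‖ = h * (‖u‖ - ‖v‖) / ‖u‖ := by
        field_simp
      have step2 : h * (‖u‖ - ‖v‖) / ‖u‖ ≤ h * ‖u - v‖ / ‖u‖ := by
        gcongr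
      have ring1 : 2 * h / ‖u‖ * ‖u - v‖ = h / ‖u‖ * ‖u - v‖ + h * ‖u - v‖ / ‖u‖ := by
        ring
      calc ‖pu - pv‖ ≤ ‖(h / ‖u‖) • (u - v)‖ + ‖(h / ‖u‖ - h / ‖v‖) • v‖ := by
            rw [e]; exact norm_add_le _ _
        _ = h / ‖u‖ * ‖u - v‖ + (h / ‖v‖ - h / ‖u‖) * ‖v‖ := by
            rw [norm_smul, norm_smul, Real.norm_eq_abs, Real.norm_eq_abs,
              abs_of_pos (by positivity), abs_of_nonpos (by linarith)]
            ring
        _ ≤ 2 * h / ‖u‖ * ‖u - v‖ := by rw [ring1]; linarith [step ▸ step2]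
    have hfpu : ‖f pu‖ ≤ 2 * L h * h := hfb pu hnpu.le
    have hfd : ‖f pu - f pv‖ ≤ L h * ‖pu - pv‖ :=
      hlip h hh pu pv (by rw [hnpu, hnpv]; simp)
    have hfd2 : ‖f pu - f pv‖ ≤ L h * (2 * h / ‖u‖ * ‖u - v‖) :=
      hfd.trans (by exact mul_le_mul_of_nonneg_left hdproj hK.le)
    have e1 : (‖v‖ / h) * (L h * (2 * h / ‖u‖ * ‖u - v‖))
        = 2 * L h * ‖u - v‖ * (‖v‖ / ‖u‖) := by
      field_simp
    have e2 : ((‖u‖ - ‖v‖) / h) * (2 * L h * h) = 2 * L h * (‖u‖ - ‖v‖) := by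
      field_simp
    have hba : ‖v‖ / ‖u‖ ≤ 1 := (div_le_one hu0).mpr huv
    have hfin1 : 2 * L h * ‖u - v‖ * (‖v‖ / ‖u‖) ≤ 2 * L h * ‖u - v‖ * 1 := by
      apply mul_le_mul_of_nonneg_left hba (by positivity)
    have hfin2 : 2 * L h * (‖u‖ - ‖v‖) ≤ 2 * L h * ‖u - v‖ :=
      mul_le_mul_of_nonneg_left hnn (by positivity)
    calc ‖fh u - fh v‖
        ≤ (‖v‖ / h) * ‖f pu - f pv‖ + ((‖u‖ - ‖v‖) / h) * ‖f pu‖ := by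
          rw [key]
          refine (norm_add_le _ _).trans ?_
          rw [norm_smul, norm_smul, Real.norm_eq_abs, Real.norm_eq_abs,
            abs_of_pos (by positivity), abs_of_nonneg (div_nonneg (by linarith) hh.le)]
      _ ≤ (‖v‖ / h) * (L h * (2 * h / ‖u‖ * ‖u - v‖)) + ((‖u‖ - ‖v‖) / h) * (2 * L h * h) := by
          have t1 := mul_le_mul_of_nonneg_left hfd2 (by positivity : (0:ℝ) ≤ ‖v‖ / h)
          have t2 := mul_le_mul_of_nonneg_left hfpu
            (div_nonneg (by linarith) hh.le : (0:ℝ) ≤ (‖u‖ - ‖v‖) / h)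
          linarith
      _ ≤ 4 * L h * ‖u - v‖ := by rw [e1, e2]; linarith
  -- mixed case
  have mixed : ∀ u v : EuclideanSpace ℝ (Fin d), ‖u‖ ≤ h → h ≤ ‖v‖ →
      ‖fh u - fh v‖ ≤ 4 * L h * ‖u - v‖ := by
    intro u v hu hv
    have hc : Continuous fun t : ℝ => ‖u + t • (v - u)‖ := by fun_prop
    have hmem : h ∈ Set.Icc (‖u + (0:ℝ) • (v - u)‖) (‖u + (1:ℝ) • (v - u)‖) := by
      simpa using ⟨hu, hv⟩
    obtain ⟨t, ht01, htz⟩ := intermediate_value_Icc zero_le_one hc.continuousOn hmem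
    set z := u + t • (v - u) with hz
    have hzn : ‖z‖ = h := htz
    have huz : ‖u - z‖ = t * ‖u - v‖ := by
      have : u - z = t • (u - v) := by rw [hz]; module
      rw [this, norm_smul, Real.norm_eq_abs, abs_of_nonneg ht01.1]
    have hzv : ‖z - v‖ = (1 - t) * ‖u - v‖ := by
      have : z - v = (1 - t) • (u - v) := by rw [hz]; module
      rw [this, norm_smul, Real.norm_eq_abs, abs_of_nonneg (by linarith [ht01.2])]
    have h1 : ‖fh u - fh z‖ ≤ L h * ‖u - z‖ := inner u z hu hzn.le
    have h2 : ‖fh v - fh z‖ ≤ 4 * L h * ‖v - z‖ := outer v z hzn.ge (hzn ▸ hv)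
    have h2' : ‖fh z - fh v‖ ≤ 4 * L h * ‖z - v‖ := by
      rwa [norm_sub_rev (fh v), norm_sub_rev v] at h2
    have htri : ‖fh u - fh v‖ ≤ ‖fh u - fh z‖ + ‖fh z - fh v‖ :=
      norm_sub_le_norm_sub_add_norm_sub _ _ _
    have hcn : 0 ≤ ‖u - v‖ := norm_nonneg _
    rw [huz] at h1
    rw [hzv] at h2'
    nlinarith [ht01.1, ht01.2, mul_nonneg (mul_nonneg hK.le ht01.1) hcn]
  -- put cases together
  intro x y
  rcases le_or_gt ‖x‖ h with hx | hx
  · rcases le_or_gt ‖y‖ h with hy | hy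
    · have := inner x y hx hy
      nlinarith [norm_nonneg (x - y)]
    · exact mixed x y hx hy.le
  · rcases le_or_gt ‖y‖ h with hy | hy
    · have := mixed y x hy hx.le
      rwa [norm_sub_rev (fh y), norm_sub_rev y] at this
    · rcases le_total ‖y‖ ‖x‖ with hxy | hxy
      · exact outer x y hy.le hxy
      · have := outer y x hx.le hxy
        rwa [norm_sub_rev (fh y), norm_sub_rev y] at this
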